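/- Consider the recursion V_{k-1} = V_k + (r2 - r1 - r2*V_k)/(r2 - r1 - V_k) with terminal condition V_{K} = 0, parameters r1 >= 1 and 0 <= r2 < 1, iterated backward from k = K. Then the sequence W_n := V_{K-n} (value after n backward steps) is strictly increasing in n and nonnegative: W_0 = 0 and W_{n+1} > W_n >= 0 for all n >= 0. -/
import Mathlib


/-- The backward value recursion `W_{n+1} = W_n + (r2 - r1 - r2 W_n)/(r2 - r1 - W_n)`
with `W_0 = 0`, `r1 ≥ 1 > r2 ≥ 0`, is strictly increasing and nonnegative. -/
theorem stmt_3 (r1 r2 : ℝ) (hr1 : 1 ≤ r1) (hr2 : 0 ≤ r2) (hr2' : r2 < 1)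
    (W : ℕ → ℝ) (h0 : W 0 = 0)
    (hrec : ∀ n, W (n + 1) = W n + (r2 - r1 - r2 * W n) / (r2 - r1 - W n)) :
    ∀ n, 0 ≤ W n ∧ W n < W (n + 1) := by
  have hd : r1 - r2 > 0 := by linarith
  have step : ∀ k, 0 ≤ W k → 0 < (r2 - r1 - r2 * W k) / (r2 - r1 - W k) := by
    intro k hk
    have heq : (r2 - r1 - r2 * W k) / (r2 - r1 - W k)
        = (r1 - r2 + r2 * W k) / (r1 - r2 + W k) := by
      rw [show r2 - r1 - r2 * W k = -(r1 - r2 + r2 * W k) by ring,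
          show r2 - r1 - W k = -(r1 - r2 + W k) by ring, neg_div_neg_eq]
    rw [heq]
    apply div_pos <;> nlinarith
  have key : ∀ n, 0 ≤ W n := by
    intro n
    induction n with
    | zero => simp [h0]
    | succ k ih =>
      rw [hrec k]
      have := step k ih
      linarith
  intro n
  refine ⟨key n, ?_⟩
  have := step n (key n)
  rw [hrec n]
  linarith
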